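/- Let X be a nonempty finite set of points in ℝ^d, let c be the center of the smallest-radius closed ball containing X (the unique global minimum point of the function H(x) = max_{a ∈ X} ‖x − a‖), and let r = H(c). Then c ∈ conv{a ∈ X : ‖a − c‖ = r}, i.e., the center of the smallest enclosing ball lies in the convex hull of the points of X at maximum distance from it. -/

import Mathlib

open RealInnerProductSpace

/-- The center `c` of the smallest enclosing ball of a nonempty finite set `X ⊂ ℝ^d`
(i.e. a global minimum point of `H(x) = max_{a ∈ X} ‖x − a‖`) lies in the convex hull of
the points of `X` at maximum distance `r = H(c)` from `c`. -/
theorem center_mem_convexHull_farthest {d : ℕ} (X : Finset (EuclideanSpace ℝ (Fin d)))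
    (hX : X.Nonempty) (c : EuclideanSpace ℝ (Fin d))
    (hc : ∀ x : EuclideanSpace ℝ (Fin d),
      X.sup' hX (fun a => ‖c - a‖) ≤ X.sup' hX (fun a => ‖x - a‖)) :
    c ∈ convexHull ℝ
      {a : EuclideanSpace ℝ (Fin d) | a ∈ X ∧ ‖a - c‖ = X.sup' hX fun b => ‖c - b‖} := by
  set r := X.sup' hX (fun a => ‖c - a‖) with hr
  by_contra hcon
  set F : Set (EuclideanSpace ℝ (Fin d)) := {a | a ∈ X ∧ ‖a - c‖ = r} with hF
  have hFfin : F.Finite := X.finite_toSet.subset (fun a ha => ha.1)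
  have hclosed : IsClosed (convexHull ℝ F) := hFfin.isClosed_convexHull (𝕜 := ℝ)
  obtain ⟨f, u, hfc, hfb⟩ :=
    geometric_hahn_banach_point_closed (convex_convexHull ℝ F) hclosed hcon
  set v := (InnerProductSpace.toDual ℝ (EuclideanSpace ℝ (Fin d))).symm f with hv
  have hvf : ∀ x, (inner ℝ v x : ℝ) = f x := fun x => InnerProductSpace.toDual_symm_apply
  have key : ∀ a ∈ X, ∃ ε₀ > 0, ∀ ε : ℝ, 0 < ε → ε ≤ ε₀ → ‖c + ε • v - a‖ < r := by
    intro a haX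
    by_cases haF : a ∈ F
    · have hfa : u < f a := hfb a (subset_convexHull ℝ F haF)
      have hB : (inner ℝ (c - a) (v) : ℝ) < 0 := by
        have h1 : (inner ℝ (c - a) (v) : ℝ) = f c - f a := by
          rw [real_inner_comm, hvf, map_sub]
        linarith
      refine ⟨-(inner ℝ (c - a) (v) : ℝ) / (‖v‖ ^ 2 + 1), div_pos (by linarith) (by positivity), ?_⟩
      intro ε hε hεle
      have expand : ‖c + ε • v - a‖ ^ 2 = ‖c - a‖ ^ 2 + 2 * (ε * (inner ℝ (c - a) (v) : ℝ))
          + ε ^ 2 * ‖v‖ ^ 2 := by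
        have hca : c + ε • v - a = (c - a) + ε • v := by abel
        rw [hca, norm_add_sq_real, real_inner_smul_right, norm_smul, Real.norm_eq_abs,
          abs_of_pos hε, mul_pow]
      have har : ‖c - a‖ = r := by rw [norm_sub_rev]; exact haF.2
      have hsq : ‖c + ε • v - a‖ ^ 2 < r ^ 2 := by
        rw [expand, har]
        have h2 : ε ≤ -(inner ℝ (c - a) (v) : ℝ) / (‖v‖ ^ 2 + 1) := hεle
        have h3 : ε * (‖v‖ ^ 2 + 1) ≤ -(inner ℝ (c - a) (v) : ℝ) := by
          rw [← le_div_iff₀ (by positivity)]; exact h2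
        nlinarith [sq_nonneg ε, sq_nonneg ‖v‖]
      have hr0 : 0 ≤ r := har ▸ norm_nonneg _
      nlinarith [norm_nonneg (c + ε • v - a)]
    · have hle : ‖c - a‖ ≤ r := X.le_sup' (fun a => ‖c - a‖) haX
      have hne : ‖c - a‖ ≠ r := by
        rw [norm_sub_rev]; exact fun h => haF ⟨haX, h⟩
      have hlt : ‖c - a‖ < r := lt_of_le_of_ne hle hne
      refine ⟨(r - ‖c - a‖) / (‖v‖ + 1), div_pos (by linarith) (by positivity), ?_⟩
      intro ε hε hεle
      have hca : c + ε • v - a = (c - a) + ε • v := by abel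
      calc ‖c + ε • v - a‖ ≤ ‖c - a‖ + ε * ‖v‖ := by
            rw [hca]
            refine (norm_add_le _ _).trans ?_
            rw [norm_smul, Real.norm_eq_abs, abs_of_pos hε]
        _ < r := by
            have h1 : ε * ‖v‖ ≤ (r - ‖c - a‖) / (‖v‖ + 1) * ‖v‖ :=
              mul_le_mul_of_nonneg_right hεle (norm_nonneg v)
            have h2 : (r - ‖c - a‖) / (‖v‖ + 1) * ‖v‖ < r - ‖c - a‖ := by
              rw [div_mul_eq_mul_div, div_lt_iff₀ (by positivity)]
              nlinarith [norm_nonneg v]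
            linarith
  choose! ε₀ hpos hεlt using key
  set ε := X.inf' hX ε₀ with hεdef
  have hεpos : 0 < ε := (Finset.lt_inf'_iff hX).2 (fun a ha => hpos a ha)
  have hsup : X.sup' hX (fun a => ‖c + ε • v - a‖) < r :=
    (Finset.sup'_lt_iff hX).2 (fun a ha => hεlt a ha ε hεpos (Finset.inf'_le _ ha))
  exact absurd (hc (c + ε • v)) (not_le.2 hsup)
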